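/- For the JHC q-addition, e_q(a) E_q(b) equals the formal exponential of the q-sum: e_q(a) E_q(b) = ∑_{n=0}^{∞} (a ⊕_q b)^n / (q;q)_n, where (a ⊕_q b)^n = ∑_{k=0}^{n} [n choose k]_q q^{k(k-1)/2} a^{n-k} b^k. -/

import Mathlib

open Finset Complex

noncomputable def qPoch (a q : ℂ) (n : ℕ) : ℂ :=
  ∏ j ∈ Finset.range n, (1 - a * q ^ j)

noncomputable def qBinom (q : ℂ) (n k : ℕ) : ℂ :=
  qPoch q q n / (qPoch q q k * qPoch q q (n - k))

noncomputable def cauchyP (q x y : ℂ) (n : ℕ) : ℂ :=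
  ∏ j ∈ Finset.range n, (x - q ^ j * y)

noncomputable def Fpoly (q x y z : ℂ) (n : ℕ) : ℂ :=
  (-1) ^ n * q ^ (-((n * (n - 1) / 2 : ℕ) : ℤ)) *
    ∑ k ∈ Finset.range (n + 1),
      qBinom q n k * (-1) ^ k * q ^ (k * (k - 1) / 2) * cauchyP q y x (n - k) * z ^ k

noncomputable def Pq (q ξ y ζ z : ℂ) (n : ℕ) : ℂ :=
  ∑ k ∈ Finset.range (n + 1),
    qBinom q n k * q ^ (k * (k - 1) / 2) * cauchyP q ξ y (n - k) * (-1) ^ k * cauchyP q ζ z k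

noncomputable def psiH (q a x y : ℂ) (n : ℕ) : ℂ := Fpoly q x (a * x) y n

noncomputable def qExp (q z : ℂ) : ℂ := ∑' k : ℕ, z ^ k / qPoch q q k

noncomputable def qExpE (q z : ℂ) : ℂ := ∑' k : ℕ, q ^ (k * (k - 1) / 2) * z ^ k / qPoch q q k

noncomputable def thetaOp (q : ℂ) (g : ℂ → ℂ → ℂ) : ℂ → ℂ → ℂ :=
  fun x y => (g (q⁻¹ * x) y - g x (q * y)) / (q⁻¹ * x - y)

open Filter
lemma qPoch_ne_zero {q : ℂ} (hq : ‖q‖ < 1) (n : ℕ) : qPoch q q n ≠ 0 := by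
  refine Finset.prod_ne_zero_iff.2 fun j _ => ?_
  intro h
  have h1 : q * q ^ j = 1 := by linear_combination -h
  have : ‖q * q ^ j‖ < 1 := by
    rw [norm_mul, norm_pow]
    calc ‖q‖ * ‖q‖ ^ j ≤ ‖q‖ * 1 :=
          mul_le_mul_of_nonneg_left (pow_le_one₀ (norm_nonneg _) hq.le)
            (norm_nonneg _)
      _ < 1 := by simpa using hq
  rw [h1] at this; simp at this

lemma qPoch_succ (q : ℂ) (n : ℕ) : qPoch q q (n + 1) = qPoch q q n * (1 - q * q ^ n) := by
  rw [qPoch, Finset.prod_range_succ]; rfl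

lemma abs_one_sub_ge {q : ℂ} (n : ℕ) :
    1 - ‖q‖ ^ (n + 1) ≤ ‖1 - q * q ^ n‖ := by
  calc 1 - ‖q‖ ^ (n + 1) = ‖(1 : ℂ)‖ - ‖q * q ^ n‖ := by
        simp [norm_mul, norm_pow, pow_succ']
    _ ≤ ‖(1 : ℂ) - q * q ^ n‖ := norm_sub_norm_le _ _
    _ = ‖1 - q * q ^ n‖ := rfl

lemma abs_one_sub_pos {q : ℂ} (hq : ‖q‖ < 1) (n : ℕ) :
    0 < ‖1 - q * q ^ n‖ := by
  have h := abs_one_sub_ge (q := q) n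
  have : ‖q‖ ^ (n + 1) < 1 :=
    pow_lt_one₀ (norm_nonneg _) hq (Nat.succ_ne_zero n)
  linarith

lemma summable_f {q a : ℂ} (hq : ‖q‖ < 1) (ha : ‖a‖ < 1) :
    Summable fun k : ℕ => ‖a ^ k / qPoch q q k‖ := by
  set l : ℝ := (1 + ‖a‖) / 2 with hl
  have hl1 : l < 1 := by rw [hl]; linarith
  have hal : ‖a‖ < l := by rw [hl]; linarith
  have hlpos : 0 < l := by positivity
  refine summable_of_ratio_norm_eventually_le hl1 ?_
  have ht : Tendsto (fun n : ℕ => ‖q‖ ^ (n + 1)) atTop (nhds 0) :=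
    (tendsto_pow_atTop_nhds_zero_of_lt_one (norm_nonneg _) hq).comp
      (tendsto_add_atTop_nat 1)
  filter_upwards [ht.eventually (gt_mem_nhds
    (show (0:ℝ) < (l - ‖a‖)/l from div_pos (by linarith) hlpos))] with n hn
  have h1 := abs_one_sub_ge (q := q) n
  have hcpos := abs_one_sub_pos hq n
  rw [lt_div_iff₀ hlpos] at hn
  have hden : ‖a‖ ≤ l * ‖1 - q * q ^ n‖ := by nlinarith
  have key : ‖a ^ (n+1) / qPoch q q (n+1)‖
      = ‖a ^ n / qPoch q q n‖ * (‖a‖ / ‖1 - q * q ^ n‖) := by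
    rw [qPoch_succ, pow_succ]
    simp only [norm_div, norm_mul, norm_pow]
    field_simp
    try ring
  rw [norm_norm, norm_norm, key]
  have hfrac : ‖a‖ / ‖1 - q * q ^ n‖ ≤ l :=
    (div_le_iff₀ hcpos).2 (by linarith [hden])
  calc ‖a ^ n / qPoch q q n‖ * (‖a‖ / ‖1 - q * q ^ n‖)
      ≤ ‖a ^ n / qPoch q q n‖ * l := by
        exact mul_le_mul_of_nonneg_left hfrac (norm_nonneg _)
    _ = l * ‖a ^ n / qPoch q q n‖ := mul_comm _ _

lemma summable_g {q b : ℂ} (hq : ‖q‖ < 1) :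
    Summable fun k : ℕ => ‖q ^ (k * (k - 1) / 2) * b ^ k / qPoch q q k‖ := by
  refine summable_of_ratio_norm_eventually_le (r := 1/2) (by norm_num) ?_
  have ht : Tendsto (fun n : ℕ => ‖q‖ ^ n * ‖b‖) atTop (nhds 0) := by
    simpa using (tendsto_pow_atTop_nhds_zero_of_lt_one (norm_nonneg _) hq).mul_const
      (‖b‖)
  filter_upwards [ht.eventually (gt_mem_nhds
    (show (0:ℝ) < (1 - ‖q‖)/2 by linarith))] with n hn
  have h1 := abs_one_sub_ge (q := q) n
  have hcpos := abs_one_sub_pos hq n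
  have hqn1 : ‖q‖ ^ (n + 1) ≤ ‖q‖ := by
    calc ‖q‖ ^ (n+1) = ‖q‖ * ‖q‖ ^ n := by ring
      _ ≤ ‖q‖ * 1 := mul_le_mul_of_nonneg_left
          (pow_le_one₀ (norm_nonneg _) hq.le) (norm_nonneg _)
      _ = ‖q‖ := mul_one _
  have hexp : (n + 1) * ((n + 1) - 1) / 2 = n * (n - 1) / 2 + n := by
    rw [← Nat.choose_two_right, ← Nat.choose_two_right, Nat.choose_succ_succ,
      Nat.choose_one_right, Nat.add_comm]
  have key : ‖q ^ ((n+1) * ((n+1) - 1) / 2) * b ^ (n+1) / qPoch q q (n+1)‖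
      = ‖q ^ (n * (n - 1) / 2) * b ^ n / qPoch q q n‖ *
        (‖q‖ ^ n * ‖b‖ / ‖1 - q * q ^ n‖) := by
    rw [qPoch_succ, pow_succ, hexp, pow_add]
    simp only [norm_div, norm_mul, norm_pow]
    field_simp
    try ring
  rw [norm_norm, norm_norm, key]
  have hfrac : ‖q‖ ^ n * ‖b‖ / ‖1 - q * q ^ n‖ ≤ 1/2 := by
    rw [div_le_iff₀ hcpos]
    nlinarith
  calc ‖q ^ (n * (n - 1) / 2) * b ^ n / qPoch q q n‖ *
        (‖q‖ ^ n * ‖b‖ / ‖1 - q * q ^ n‖)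
      ≤ ‖q ^ (n * (n - 1) / 2) * b ^ n / qPoch q q n‖ * (1/2) :=
        mul_le_mul_of_nonneg_left hfrac (norm_nonneg _)
    _ = 1/2 * ‖q ^ (n * (n - 1) / 2) * b ^ n / qPoch q q n‖ := mul_comm _ _

theorem qExp_mul_qExpE_eq_qAdd_series (q a b : ℂ) (hq : ‖q‖ < 1)
    (ha : ‖a‖ < 1) :
    HasSum (fun n : ℕ =>
        (∑ k ∈ Finset.range (n + 1),
            qBinom q n k * q ^ (k * (k - 1) / 2) * a ^ (n - k) * b ^ k) / qPoch q q n)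
      (qExp q a * qExpE q b) := by
  have hf := summable_f hq ha
  have hg := summable_g (b := b) hq
  have H := hasSum_sum_range_mul_of_summable_norm hf hg
  have hval : qExp q a * qExpE q b
      = (∑' k : ℕ, a ^ k / qPoch q q k) *
        ∑' k : ℕ, q ^ (k * (k - 1) / 2) * b ^ k / qPoch q q k := rfl
  rw [hval]
  convert H using 2 with n
  case e'_3 => rfl
  have hrefl := Finset.sum_range_reflect
    (fun k => a ^ k / qPoch q q k *
      (q ^ ((n - k) * ((n - k) - 1) / 2) * b ^ (n - k) / qPoch q q (n - k))) (n + 1)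
  simp only [Nat.add_sub_cancel] at hrefl
  rw [← hrefl, Finset.sum_div]
  refine Finset.sum_congr rfl fun k hk => ?_
  have hkn : k ≤ n := Nat.lt_succ_iff.mp (Finset.mem_range.mp hk)
  have h2 : n - (n - k) = k := Nat.sub_sub_self hkn
  rw [h2, qBinom]
  have h3 := qPoch_ne_zero hq n
  have h4 := qPoch_ne_zero hq k
  have h5 := qPoch_ne_zero hq (n - k)
  field_simp
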